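/- arXiv:2105.08919 — 4 statements merged into one kernel-verified Lean document; each statement's English description precedes it below -/
import Mathlib

section
/- For any fixed logit vector z ∈ ℝ^K (K ≥ 1) and any class index k, lim_{τ→∞} τ·(p_k(z,τ) − 1/K) = (1/K)·(z_k − (1/K)∑_{j=1}^K z_j). -/
open Filter Topology

/-- Softened probability of class `k` for logit vector `z` at temperature `τ`. -/
noncomputable def softProb {K : ℕ} (z : Fin K → ℝ) (τ : ℝ) (k : Fin K) : ℝ :=
  Real.exp (z k / τ) / ∑ j, Real.exp (z j / τ)

/-- Distillation loss `L_KL` between student logits `zs` and teacher logits `zt`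
at temperature `τ`. -/
noncomputable def LKL {K : ℕ} (zs zt : Fin K → ℝ) (τ : ℝ) : ℝ :=
  τ ^ 2 * ∑ j, softProb zt τ j * Real.log (softProb zt τ j / softProb zs τ j)

/-- `lim_{τ→∞} τ·(p_k(z,τ) − 1/K) = (1/K)·(z_k − (1/K)∑_j z_j)`. -/
theorem stmt_2 {K : ℕ} (hK : 1 ≤ K) (z : Fin K → ℝ) (k : Fin K) :
    Tendsto (fun τ : ℝ => τ * (softProb z τ k - 1 / (K : ℝ))) atTop
      (𝓝 ((1 / (K : ℝ)) * (z k - (1 / (K : ℝ)) * ∑ j, z j))) := by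
  have hKpos : (0:ℝ) < (K:ℝ) := by exact_mod_cast Nat.lt_of_lt_of_le Nat.zero_lt_one hK
  have hK0 : (K:ℝ) ≠ 0 := ne_of_gt hKpos
  set g : ℝ → ℝ := fun x => Real.exp (z k * x) / ∑ j, Real.exp (z j * x) with hg
  have hN : HasDerivAt (fun x => Real.exp (z k * x)) (z k) 0 := by
    simpa using ((hasDerivAt_id (0:ℝ)).const_mul (z k)).exp
  have hD : HasDerivAt (fun x => ∑ j, Real.exp (z j * x)) (∑ j, z j) 0 := by
    have h := HasDerivAt.fun_sum (u := Finset.univ)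
      (A := fun j (x : ℝ) => Real.exp (z j * x)) (A' := fun j => z j) (x := (0:ℝ))
      (fun j _ => by simpa using ((hasDerivAt_id (0:ℝ)).const_mul (z j)).exp)
    simpa using h
  have hD0 : (∑ j : Fin K, Real.exp (z j * 0)) = (K:ℝ) := by simp
  have hg' : HasDerivAt g ((1 / (K : ℝ)) * (z k - (1 / (K : ℝ)) * ∑ j, z j)) 0 := by
    have h := hN.div hD (by rw [hD0]; exact hK0)
    refine h.congr_deriv (Eq.symm ?_)
    rw [hD0]
    simp only [mul_zero, Real.exp_zero, one_mul]
    rw [eq_div_iff (pow_ne_zero 2 hK0)]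
    field_simp
  have hslope := hasDerivAt_iff_tendsto_slope.mp hg'
  have hinv : Tendsto (fun τ : ℝ => τ⁻¹) atTop (𝓝[≠] (0:ℝ)) := by
    refine tendsto_nhdsWithin_of_tendsto_nhds_of_eventually_within _
      tendsto_inv_atTop_zero ?_
    filter_upwards [eventually_gt_atTop (0:ℝ)] with τ hτ
    exact (inv_pos.mpr hτ).ne'
  have hcomp := hslope.comp hinv
  refine hcomp.congr' ?_
  filter_upwards [eventually_gt_atTop (0:ℝ)] with τ hτ
  have hτ0 : τ ≠ 0 := ne_of_gt hτ
  have hg0 : g 0 = 1 / (K:ℝ) := by simp [hg]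
  have hgτ : g τ⁻¹ = softProb z τ k := by
    simp [hg, softProb, div_eq_mul_inv]
  simp only [Function.comp_apply, slope_def_field, hg0, hgτ, sub_zero]
  rw [div_eq_mul_inv, inv_inv]
  ring
end

section
/- (Proposition 1, large-temperature limit.) For logit vectors z^s, z^t ∈ ℝ^K (K ≥ 1) and any class index k, lim_{τ→∞} τ·(p_k(z^s,τ) − p_k(z^t,τ)) = (1/K²) ∑_{j=1}^K ((z^s_k − z^s_j) − (z^t_k − z^t_j)); equivalently, the gradient of the distillation loss L_KL in z^s_k converges, as τ → ∞, to (1/K²) ∑_{j=1}^K ((z^s_k − z^s_j) − (z^t_k − z^t_j)). -/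
open Filter Topology

lemma aux_deriv {K : ℕ} (hK : 1 ≤ K) (z : Fin K → ℝ) (k : Fin K) :
    HasDerivAt (fun t : ℝ => Real.exp (t * z k) / ∑ j, Real.exp (t * z j))
      ((z k * K - ∑ j, z j) / (K : ℝ) ^ 2) 0 := by
  have hnum : HasDerivAt (fun t : ℝ => Real.exp (t * z k)) (z k) 0 := by
    have h := ((hasDerivAt_id (0:ℝ)).mul_const (z k)).exp
    simpa using h
  have hden : HasDerivAt (fun t : ℝ => ∑ j, Real.exp (t * z j)) (∑ j, z j) 0 := by
    apply HasDerivAt.fun_sum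
    intro j _
    have h := ((hasDerivAt_id (0:ℝ)).mul_const (z j)).exp
    simpa using h
  have hS0 : (∑ j : Fin K, Real.exp (0 * z j)) = (K : ℝ) := by simp
  have hKpos : (0:ℝ) < K := by exact_mod_cast hK
  have hne : (∑ j : Fin K, Real.exp (0 * z j)) ≠ 0 := by rw [hS0]; positivity
  have : HasDerivAt (fun t : ℝ => Real.exp (t * z k) / ∑ j, Real.exp (t * z j)) _ 0 :=
    hnum.div hden hne
  convert this using 1
  rw [hS0]
  simp

/-- Proposition 1, large-temperature limit: the gradient `τ·(p_k(z^s,τ) − p_k(z^t,τ))`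
of `L_KL` in `z^s_k` converges, as `τ → ∞`, to
`(1/K²) ∑_j ((z^s_k − z^s_j) − (z^t_k − z^t_j))`. -/
theorem stmt_3 {K : ℕ} (hK : 1 ≤ K) (zs zt : Fin K → ℝ) (k : Fin K) :
    Tendsto (fun τ : ℝ => τ * (softProb zs τ k - softProb zt τ k)) atTop
      (𝓝 ((1 / (K : ℝ) ^ 2) * ∑ j, ((zs k - zs j) - (zt k - zt j)))) := by
  have hKpos : (0:ℝ) < K := by exact_mod_cast hK
  set G : ℝ → ℝ := fun t =>
    Real.exp (t * zs k) / (∑ j, Real.exp (t * zs j)) -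
    Real.exp (t * zt k) / (∑ j, Real.exp (t * zt j)) with hG
  set d : ℝ := (zs k * K - ∑ j, zs j) / (K : ℝ) ^ 2 -
    (zt k * K - ∑ j, zt j) / (K : ℝ) ^ 2 with hd
  have hder : HasDerivAt G d 0 := (aux_deriv hK zs k).sub (aux_deriv hK zt k)
  have hG0 : G 0 = 0 := by simp [hG]
  have hslope : Tendsto (slope G 0) (𝓝[≠] 0) (𝓝 d) :=
    hasDerivAt_iff_tendsto_slope.mp hder
  have hinv : Tendsto (fun τ : ℝ => τ⁻¹) atTop (𝓝[≠] (0:ℝ)) := by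
    apply tendsto_nhdsWithin_of_tendsto_nhds_of_eventually_within _ tendsto_inv_atTop_zero
    filter_upwards [eventually_gt_atTop (0:ℝ)] with τ hτ
    exact (inv_pos.mpr hτ).ne'
  have hcomp := hslope.comp hinv
  have hval : d = (1 / (K : ℝ) ^ 2) * ∑ j, ((zs k - zs j) - (zt k - zt j)) := by
    rw [hd]
    have : ∑ j : Fin K, ((zs k - zs j) - (zt k - zt j)) =
        (zs k * K - ∑ j, zs j) - (zt k * K - ∑ j, zt j) := by
      rw [Finset.sum_sub_distrib, Finset.sum_sub_distrib, Finset.sum_sub_distrib]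
      simp [Finset.sum_const, mul_comm]
    rw [this]; ring
  rw [← hval]
  apply hcomp.congr'
  filter_upwards [eventually_gt_atTop (0:ℝ)] with τ hτ
  have hτ0 : τ ≠ 0 := hτ.ne'
  have hs : ∀ z : Fin K → ℝ, softProb z τ k =
      Real.exp (τ⁻¹ * z k) / ∑ j, Real.exp (τ⁻¹ * z j) := by
    intro z
    simp [softProb, div_eq_inv_mul, mul_comm]
  simp only [Function.comp_apply, slope_def_field, hG0, sub_zero, hs]
  rw [hG]
  field_simp
end

section
/- For logit vectors z^s, z^t ∈ ℝ^K (K ≥ 1), the distillation loss converges as the temperature tends to infinity: lim_{τ→∞} L_KL(z^s, z^t, τ) = (1/(2K))·‖z^s − z^t‖₂² − (1/(2K²))·(∑_{j=1}^K z^s_j − ∑_{j=1}^K z^t_j)². -/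
open Filter Topology

lemma exp_taylor2 {x : ℝ} (hx : |x| ≤ 1) : |Real.exp x - 1 - x| ≤ |x|^2 := by
  have h := Real.exp_bound hx (n := 2) (by norm_num)
  simp [Finset.sum_range_succ] at h
  calc |Real.exp x - 1 - x| = |Real.exp x - (1 + x)| := by ring_nf
    _ ≤ |x|^2 * (3/(2*2)) := by simpa using h
    _ ≤ |x|^2 := by nlinarith [sq_nonneg x, abs_nonneg x, sq_abs x]

lemma exp_taylor3 {x : ℝ} (hx : |x| ≤ 1) : |Real.exp x - 1 - x - x^2/2| ≤ |x|^3 := by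
  have h := Real.exp_bound hx (n := 3) (by norm_num)
  simp [Finset.sum_range_succ] at h
  calc |Real.exp x - 1 - x - x^2/2| = |Real.exp x - (1 + x + x^2/2)| := by ring_nf
    _ ≤ |x|^3 * (4/(6*3)) := by simpa [Nat.factorial] using h
    _ ≤ |x|^3 := by nlinarith [abs_nonneg x, pow_nonneg (abs_nonneg x) 3]

noncomputable def psiAux (u : ℝ) : ℝ :=
  if u = 0 then -(1/2) else (Real.log (1+u) - u)/u^2

lemma psiAux_id (u : ℝ) : u^2 * psiAux u = Real.log (1+u) - u := by
  by_cases h : u = 0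
  · simp [h, psiAux]
  · rw [psiAux, if_neg h]; field_simp

lemma log_taylor2 {u : ℝ} (hu : |u| < 1) :
    |Real.log (1+u) - u + u^2/2| ≤ |u|^3 / (1 - |u|) := by
  have h := Real.abs_log_sub_add_sum_range_le (x := -u) (by simpa using hu) 2
  simp [Finset.sum_range_succ] at h
  have heq : Real.log (1+u) - u + u^2/2 = -u + u^2/(1+1) + Real.log (1+u) := by ring
  rw [heq]; exact h

lemma tendsto_psiAux : Tendsto psiAux (𝓝 0) (𝓝 (-(1/2))) := by
  rw [← tendsto_sub_nhds_zero_iff]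
  apply squeeze_zero_norm' (a := fun u => |u| / (1 - |u|))
  · filter_upwards [eventually_abs_sub_lt 0 (show (0:ℝ) < 1/2 by norm_num)] with u hu
    simp only [sub_zero] at hu
    have hu1 : |u| < 1 := hu.trans (by norm_num)
    by_cases h : u = 0
    · simp [h, psiAux]
    · have hu0 : 0 < u^2 := by positivity
      have := log_taylor2 hu1
      rw [Real.norm_eq_abs]
      have heq : psiAux u - -(1/2) = (Real.log (1+u) - u + u^2/2) / u^2 := by
        rw [psiAux, if_neg h, sub_neg_eq_add, eq_div_iff hu0.ne']; field_simp
      rw [heq, abs_div, abs_of_pos hu0, div_le_div_iff₀ hu0 (by linarith)]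
      calc |Real.log (1+u) - u + u^2/2| * (1 - |u|) ≤ (|u|^3/(1-|u|)) * (1-|u|) := by
            apply mul_le_mul_of_nonneg_right this (by linarith)
        _ = |u|^3 := div_mul_cancel₀ _ (ne_of_gt (by linarith : (0:ℝ) < 1 - |u|))
        _ = |u| * u^2 := by rw [pow_succ' ,sq_abs]
  · have : ContinuousAt (fun u : ℝ => |u| / (1 - |u|)) 0 := by
      apply ContinuousAt.div (by fun_prop) (by fun_prop); norm_num
    simpa using this.tendsto

lemma tendsto_div_atTop_zero (a : ℝ) : Tendsto (fun τ : ℝ => a / τ) atTop (𝓝 0) :=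
  Tendsto.div_atTop tendsto_const_nhds tendsto_id

lemma tendsto_tau_exp (a : ℝ) :
    Tendsto (fun τ : ℝ => τ * (Real.exp (a/τ) - 1)) atTop (𝓝 a) := by
  rw [← tendsto_sub_nhds_zero_iff]
  apply squeeze_zero_norm' (a := fun τ => a^2 / τ)
  · filter_upwards [eventually_ge_atTop (|a| + 1)] with τ hτ
    have hτ1 : (1:ℝ) ≤ τ := le_trans (by linarith [abs_nonneg a]) hτ
    have hτ0 : (0:ℝ) < τ := by linarith
    have hx : |a/τ| ≤ 1 := by
      rw [abs_div, abs_of_pos hτ0, div_le_one hτ0]; calc |a| ≤ |a| + 1 := by linarith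
        _ ≤ τ := hτ
    have h := exp_taylor2 hx
    have heq : τ * (Real.exp (a/τ) - 1) - a = τ * (Real.exp (a/τ) - 1 - a/τ) := by
      field_simp
    rw [Real.norm_eq_abs, heq, abs_mul, abs_of_pos hτ0]
    calc τ * |Real.exp (a/τ) - 1 - a/τ| ≤ τ * |a/τ|^2 :=
          mul_le_mul_of_nonneg_left h hτ0.le
      _ = a^2 / τ := by rw [abs_div, abs_of_pos hτ0, div_pow, sq_abs]; field_simp
  · exact tendsto_div_atTop_zero _

lemma tendsto_tau2_exp (a : ℝ) :
    Tendsto (fun τ : ℝ => τ^2 * (Real.exp (a/τ) - 1 - a/τ)) atTop (𝓝 (a^2/2)) := by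
  rw [← tendsto_sub_nhds_zero_iff]
  apply squeeze_zero_norm' (a := fun τ => |a|^3 / τ)
  · filter_upwards [eventually_ge_atTop (|a| + 1)] with τ hτ
    have hτ1 : (1:ℝ) ≤ τ := le_trans (by linarith [abs_nonneg a]) hτ
    have hτ0 : (0:ℝ) < τ := by linarith
    have hx : |a/τ| ≤ 1 := by
      rw [abs_div, abs_of_pos hτ0, div_le_one hτ0]; calc |a| ≤ |a| + 1 := by linarith
        _ ≤ τ := hτ
    have h := exp_taylor3 hx
    have heq : τ^2 * (Real.exp (a/τ) - 1 - a/τ) - a^2/2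
        = τ^2 * (Real.exp (a/τ) - 1 - a/τ - (a/τ)^2/2) := by
      field_simp
    rw [Real.norm_eq_abs, heq, abs_mul, abs_of_pos (by positivity : (0:ℝ) < τ^2)]
    calc τ^2 * |Real.exp (a/τ) - 1 - a/τ - (a/τ)^2/2| ≤ τ^2 * |a/τ|^3 :=
          mul_le_mul_of_nonneg_left h (by positivity)
      _ = |a|^3 / τ := by
          rw [abs_div, abs_of_pos hτ0, div_pow]; field_simp
  · exact tendsto_div_atTop_zero _

lemma key_identity {K : ℕ} (hK : 1 ≤ K) (zs zt : Fin K → ℝ) {τ : ℝ} (hτ : 0 < τ) :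
    LKL zs zt τ =
      (1 / (∑ j, Real.exp (zt j / τ))) *
          (∑ j, (τ * (Real.exp (zt j / τ) - 1)) * (zt j - zs j))
      + (1 / (∑ j, Real.exp (zt j / τ))) *
          (∑ j, (τ^2 * (Real.exp (zs j / τ) - 1 - zs j / τ)
            - τ^2 * (Real.exp (zt j / τ) - 1 - zt j / τ)))
      + (τ * (((∑ j, Real.exp (zs j / τ)) - ∑ j, Real.exp (zt j / τ))
              / ∑ j, Real.exp (zt j / τ)))^2
          * psiAux ((((∑ j, Real.exp (zs j / τ)) - ∑ j, Real.exp (zt j / τ))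
              / ∑ j, Real.exp (zt j / τ))) := by
  have hne : Nonempty (Fin K) := Fin.pos_iff_nonempty.mp hK
  have huniv : (Finset.univ : Finset (Fin K)).Nonempty := Finset.univ_nonempty
  set A := ∑ j, Real.exp (zt j / τ) with hA
  set B := ∑ j, Real.exp (zs j / τ) with hB
  have hApos : 0 < A := Finset.sum_pos (fun j _ => Real.exp_pos _) huniv
  have hBpos : 0 < B := Finset.sum_pos (fun j _ => Real.exp_pos _) huniv
  set u := (B - A) / A with hu
  set L := Real.log B - Real.log A with hL
  have hτ0 : τ ≠ 0 := hτ.ne'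
  -- per-term log computation
  have hlogeq : ∀ j : Fin K, Real.log (softProb zt τ j / softProb zs τ j)
      = (zt j - zs j)/τ + L := by
    intro j
    simp only [softProb]
    rw [← hA, ← hB,
      Real.log_div (by positivity) (by positivity),
      Real.log_div (Real.exp_pos _).ne' hApos.ne',
      Real.log_div (Real.exp_pos _).ne' hBpos.ne',
      Real.log_exp, Real.log_exp, hL]
    field_simp
    ring
  have hsum : ∑ j, softProb zt τ j * Real.log (softProb zt τ j / softProb zs τ j)
      = (∑ j, Real.exp (zt j/τ) * ((zt j - zs j)/τ + L)) / A := by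
    rw [Finset.sum_div]
    apply Finset.sum_congr rfl
    intro j _
    rw [hlogeq j]
    simp only [softProb]
    rw [← hA]
    ring
  have hnum : ∑ j, Real.exp (zt j/τ) * ((zt j - zs j)/τ + L)
      = (1/τ) * (∑ j, Real.exp (zt j/τ) * (zt j - zs j)) + L * A := by
    rw [hA, Finset.mul_sum, Finset.mul_sum, ← Finset.sum_add_distrib]
    apply Finset.sum_congr rfl
    intro j _
    field_simp
  have h1 : LKL zs zt τ
      = (τ / A) * (∑ j, Real.exp (zt j/τ) * (zt j - zs j)) + τ^2 * L := by
    rw [LKL, hsum, hnum]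
    field_simp
  have hLu : L = u + u^2 * psiAux u := by
    rw [psiAux_id]
    have h1u : 1 + u = B / A := by rw [hu]; field_simp; ring
    rw [h1u, Real.log_div hBpos.ne' hApos.ne', hL]
    ring
  have hmain : τ * (∑ j, Real.exp (zt j/τ) * (zt j - zs j)) + τ^2 * (B - A)
      = (∑ j, (τ * (Real.exp (zt j / τ) - 1)) * (zt j - zs j))
        + (∑ j, (τ^2 * (Real.exp (zs j / τ) - 1 - zs j / τ)
            - τ^2 * (Real.exp (zt j / τ) - 1 - zt j / τ))) := by
    rw [hA, hB, ← Finset.sum_sub_distrib, Finset.mul_sum, Finset.mul_sum,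
      ← Finset.sum_add_distrib, ← Finset.sum_add_distrib]
    apply Finset.sum_congr rfl
    intro j _
    field_simp
    ring
  have h2 : (τ / A) * (∑ j, Real.exp (zt j/τ) * (zt j - zs j)) + τ^2 * u
      = (1 / A) * ((∑ j, (τ * (Real.exp (zt j / τ) - 1)) * (zt j - zs j))
        + (∑ j, (τ^2 * (Real.exp (zs j / τ) - 1 - zs j / τ)
            - τ^2 * (Real.exp (zt j / τ) - 1 - zt j / τ)))) := by
    rw [← hmain, hu]
    field_simp
  rw [h1, hLu]
  linear_combination h2

/-- `lim_{τ→∞} L_KL(z^s, z^t, τ)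
  = (1/(2K))·‖z^s − z^t‖₂² − (1/(2K²))·(∑_j z^s_j − ∑_j z^t_j)²`. -/
theorem stmt_7 {K : ℕ} (hK : 1 ≤ K) (zs zt : Fin K → ℝ) :
    Tendsto (fun τ : ℝ => LKL zs zt τ) atTop
      (𝓝 ((1 / (2 * (K : ℝ))) * ∑ j, (zs j - zt j) ^ 2 -
          (1 / (2 * (K : ℝ) ^ 2)) * ((∑ j, zs j) - ∑ j, zt j) ^ 2)) := by
  have hne : Nonempty (Fin K) := Fin.pos_iff_nonempty.mp hK
  have hKpos : (0:ℝ) < K := by exact_mod_cast hK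
  have hKne : (K:ℝ) ≠ 0 := hKpos.ne'
  -- limits of the exponential sums
  have hsumlim : ∀ z : Fin K → ℝ,
      Tendsto (fun τ : ℝ => ∑ j, Real.exp (z j / τ)) atTop (𝓝 K) := by
    intro z
    have h1 : ∀ j : Fin K, Tendsto (fun τ : ℝ => Real.exp (z j / τ)) atTop (𝓝 1) := by
      intro j
      have := (Real.continuous_exp.tendsto 0).comp (tendsto_div_atTop_zero (z j))
      simpa [Function.comp_def] using this
    have := tendsto_finset_sum Finset.univ (fun j (_ : j ∈ Finset.univ) => h1 j)
    simpa [Finset.sum_const, Finset.card_univ] using this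
  have hAlim := hsumlim zt
  have hBlim := hsumlim zs
  -- limit of τ * u τ
  have hnum : Tendsto (fun τ : ℝ =>
      τ * (((∑ j, Real.exp (zs j / τ)) - ∑ j, Real.exp (zt j / τ))
          / ∑ j, Real.exp (zt j / τ))) atTop
      (𝓝 ((∑ j, (zs j - zt j)) / K)) := by
    have hdiff : Tendsto (fun τ : ℝ =>
        ∑ j, (τ * (Real.exp (zs j / τ) - 1) - τ * (Real.exp (zt j / τ) - 1))) atTop
        (𝓝 (∑ j, (zs j - zt j))) := by
      exact tendsto_finset_sum Finset.univ
        (fun j _ => (tendsto_tau_exp (zs j)).sub (tendsto_tau_exp (zt j)))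
    have heq : ∀ τ : ℝ, τ * (((∑ j, Real.exp (zs j / τ)) - ∑ j, Real.exp (zt j / τ))
          / ∑ j, Real.exp (zt j / τ))
        = (∑ j, (τ * (Real.exp (zs j / τ) - 1) - τ * (Real.exp (zt j / τ) - 1)))
          / ∑ j, Real.exp (zt j / τ) := by
      intro τ
      have : ∑ j, (τ * (Real.exp (zs j / τ) - 1) - τ * (Real.exp (zt j / τ) - 1))
          = τ * ((∑ j, Real.exp (zs j / τ)) - ∑ j, Real.exp (zt j / τ)) := by
        rw [mul_sub, Finset.mul_sum, Finset.mul_sum, ← Finset.sum_sub_distrib]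
        exact Finset.sum_congr rfl fun j _ => by ring
      rw [this, mul_div_assoc]
    simp only [heq]
    exact hdiff.div hAlim hKne
  -- limit of u τ
  have hulim : Tendsto (fun τ : ℝ =>
      (((∑ j, Real.exp (zs j / τ)) - ∑ j, Real.exp (zt j / τ))
          / ∑ j, Real.exp (zt j / τ))) atTop (𝓝 0) := by
    have := (hBlim.sub hAlim).div hAlim hKne
    simp only [sub_self, zero_div] at this
    exact this
  -- limits of the three pieces
  have hT1 : Tendsto (fun τ : ℝ => (1 / (∑ j, Real.exp (zt j / τ))) *
      (∑ j, (τ * (Real.exp (zt j / τ) - 1)) * (zt j - zs j))) atTop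
      (𝓝 ((1/K) * ∑ j, zt j * (zt j - zs j))) := by
    exact (tendsto_const_nhds.div hAlim hKne).mul
      (tendsto_finset_sum Finset.univ
        (fun j _ => (tendsto_tau_exp (zt j)).mul_const (zt j - zs j)))
  have hT2 : Tendsto (fun τ : ℝ => (1 / (∑ j, Real.exp (zt j / τ))) *
      (∑ j, (τ^2 * (Real.exp (zs j / τ) - 1 - zs j / τ)
        - τ^2 * (Real.exp (zt j / τ) - 1 - zt j / τ)))) atTop
      (𝓝 ((1/K) * ∑ j, ((zs j)^2/2 - (zt j)^2/2))) := by
    exact (tendsto_const_nhds.div hAlim hKne).mul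
      (tendsto_finset_sum Finset.univ
        (fun j _ => (tendsto_tau2_exp (zs j)).sub (tendsto_tau2_exp (zt j))))
  have hT3 : Tendsto (fun τ : ℝ =>
      (τ * (((∑ j, Real.exp (zs j / τ)) - ∑ j, Real.exp (zt j / τ))
              / ∑ j, Real.exp (zt j / τ)))^2
          * psiAux ((((∑ j, Real.exp (zs j / τ)) - ∑ j, Real.exp (zt j / τ))
              / ∑ j, Real.exp (zt j / τ)))) atTop
      (𝓝 (((∑ j, (zs j - zt j)) / K)^2 * (-(1/2)))) := by
    exact (hnum.pow 2).mul (tendsto_psiAux.comp hulim)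
  have hG := (hT1.add hT2).add hT3
  -- identify the limit value
  have hval : (1/(K:ℝ)) * ∑ j, zt j * (zt j - zs j)
      + (1/(K:ℝ)) * ∑ j, ((zs j)^2/2 - (zt j)^2/2)
      + ((∑ j, (zs j - zt j)) / K)^2 * (-(1/2))
      = (1 / (2 * (K : ℝ))) * ∑ j, (zs j - zt j) ^ 2 -
          (1 / (2 * (K : ℝ) ^ 2)) * ((∑ j, zs j) - ∑ j, zt j) ^ 2 := by
    have comb : (∑ j, zt j * (zt j - zs j)) + (∑ j, ((zs j)^2/2 - (zt j)^2/2))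
        = (∑ j, (zs j - zt j)^2) / 2 := by
      rw [← Finset.sum_add_distrib, Finset.sum_div]
      exact Finset.sum_congr rfl fun j _ => by ring
    have e2 : ∑ j, (zs j - zt j) = (∑ j, zs j) - ∑ j, zt j := Finset.sum_sub_distrib _ _
    rw [← e2]
    linear_combination (1/(K:ℝ)) * comb
  rw [← hval]
  refine hG.congr' ?_
  filter_upwards [eventually_gt_atTop 0] with τ hτ
  exact (key_identity hK zs zt hτ).symm
end

section
/- For logit vectors z^s, z^t ∈ ℝ^K (K ≥ 1) satisfying ∑_{j=1}^K z^s_j = ∑_{j=1}^K z^t_j (in particular when both logit vectors have zero mean), lim_{τ→∞} L_KL(z^s, z^t, τ) = (1/(2K))·‖z^s − z^t‖₂², i.e., the infinite-temperature distillation loss equals the mean-squared-error loss between logits up to the factor 1/(2K). -/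
open Filter Topology

noncomputable def Sf {K : ℕ} (z : Fin K → ℝ) (x : ℝ) : ℝ := ∑ j, Real.exp (z j * x)
noncomputable def Cf {K : ℕ} (z : Fin K → ℝ) (x : ℝ) : ℝ := ∑ j, z j * Real.exp (z j * x)
noncomputable def Qf {K : ℕ} (z : Fin K → ℝ) (x : ℝ) : ℝ := ∑ j, z j ^ 2 * Real.exp (z j * x)

lemma hasDerivAt_exp_mul (c x : ℝ) :
    HasDerivAt (fun y => Real.exp (c * y)) (c * Real.exp (c * x)) x := by
  simpa [mul_comm] using ((hasDerivAt_id x).const_mul c).exp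

lemma hasDerivAt_Sf {K : ℕ} (z : Fin K → ℝ) (x : ℝ) : HasDerivAt (Sf z) (Cf z x) x :=
  HasDerivAt.fun_sum fun j _ => hasDerivAt_exp_mul (z j) x

lemma hasDerivAt_Cf {K : ℕ} (z : Fin K → ℝ) (x : ℝ) : HasDerivAt (Cf z) (Qf z x) x := by
  apply HasDerivAt.fun_sum
  intro j _
  simpa [sq, mul_comm, mul_left_comm, mul_assoc] using
    ((hasDerivAt_exp_mul (z j) x).const_mul (z j))

lemma Sf_pos {K : ℕ} (hK : 1 ≤ K) (z : Fin K → ℝ) (x : ℝ) : 0 < Sf z x := by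
  have : Nonempty (Fin K) := Fin.pos_iff_nonempty.mp hK
  exact Finset.sum_pos (fun _ _ => Real.exp_pos _) Finset.univ_nonempty

lemma Sf_zero {K : ℕ} (z : Fin K → ℝ) : Sf z 0 = K := by simp [Sf]

lemma Cf_zero {K : ℕ} (z : Fin K → ℝ) : Cf z 0 = ∑ j, z j := by simp [Cf]

lemma Qf_zero {K : ℕ} (z : Fin K → ℝ) : Qf z 0 = ∑ j, z j ^ 2 := by simp [Qf]

lemma key_alg (τ a b s : ℝ) (hτ : τ ≠ 0) (hs : s ≠ 0) :
    a / τ⁻¹ / s + b / (τ⁻¹) ^ 2 = τ ^ 2 * ((τ⁻¹ * a + b * s) / s) := by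
  field_simp

/-- If the student and teacher logit sums agree, the infinite-temperature distillation
loss equals the MSE loss between logits up to the factor `1/(2K)`. -/
theorem stmt_8 {K : ℕ} (hK : 1 ≤ K) (zs zt : Fin K → ℝ)
    (hsum : (∑ j, zs j) = ∑ j, zt j) :
    Tendsto (fun τ : ℝ => LKL zs zt τ) atTop
      (𝓝 ((1 / (2 * (K : ℝ))) * ∑ j, (zs j - zt j) ^ 2)) := by
  have hKR : (0 : ℝ) < K := by exact_mod_cast hK
  -- the functions of x = 1/τ
  set F : ℝ → ℝ := fun x => ∑ j, (zt j - zs j) * Real.exp (zt j * x) with hF_def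
  set L : ℝ → ℝ := fun x => Real.log (Sf zs x) - Real.log (Sf zt x) with hL_def
  set D : ℝ → ℝ := fun x => Cf zs x / Sf zs x - Cf zt x / Sf zt x with hD_def
  have hF0 : F 0 = 0 := by
    simp only [hF_def, Real.exp_zero, mul_zero, mul_one]
    rw [Finset.sum_sub_distrib, hsum, sub_self]
  have hFd : HasDerivAt F (∑ j, (zt j - zs j) * zt j) 0 := by
    apply HasDerivAt.fun_sum
    intro j _
    simpa [mul_comm, mul_left_comm, mul_assoc] using
      ((hasDerivAt_exp_mul (zt j) 0).const_mul (zt j - zs j))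
  -- limit of F x / x
  have hA : Tendsto (fun x => F x / x) (𝓝[≠] (0:ℝ)) (𝓝 (∑ j, (zt j - zs j) * zt j)) := by
    have := hasDerivAt_iff_tendsto_slope.mp hFd
    refine this.congr fun y => ?_
    simp [slope_def_field, hF0]
  -- limit of Sf zt
  have hStc : Tendsto (Sf zt) (𝓝 (0:ℝ)) (𝓝 (K : ℝ)) := by
    have := (hasDerivAt_Sf zt 0).continuousAt
    rw [ContinuousAt, Sf_zero] at this
    exact this
  have hterm1 : Tendsto (fun x => F x / x / Sf zt x) (𝓝[≠] (0:ℝ))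
      (𝓝 ((∑ j, (zt j - zs j) * zt j) / K)) :=
    hA.div (hStc.mono_left nhdsWithin_le_nhds) (ne_of_gt hKR)
  -- derivative setup for L
  have hLd : ∀ x : ℝ, HasDerivAt L (D x) x := fun x =>
    (((hasDerivAt_Sf zs x).log (Sf_pos hK zs x).ne')).sub
      (((hasDerivAt_Sf zt x).log (Sf_pos hK zt x).ne'))
  set c : ℝ := (Qf zs 0 * Sf zs 0 - Cf zs 0 * Cf zs 0) / Sf zs 0 ^ 2 -
      (Qf zt 0 * Sf zt 0 - Cf zt 0 * Cf zt 0) / Sf zt 0 ^ 2 with hc_def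
  have hDd : HasDerivAt D c 0 :=
    (((hasDerivAt_Cf zs 0).div (hasDerivAt_Sf zs 0) (Sf_pos hK zs 0).ne')).sub
      (((hasDerivAt_Cf zt 0).div (hasDerivAt_Sf zt 0) (Sf_pos hK zt 0).ne'))
  have hD0 : D 0 = 0 := by
    simp only [hD_def, Cf_zero, Sf_zero, hsum, sub_self]
  have hDslope : Tendsto (fun x => D x / x) (𝓝[≠] (0:ℝ)) (𝓝 c) := by
    have := hasDerivAt_iff_tendsto_slope.mp hDd
    refine this.congr fun y => ?_
    simp [slope_def_field, hD0]
  -- L'Hopital for L x / x^2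
  have hB : Tendsto (fun x => L x / x ^ 2) (𝓝[>] (0:ℝ)) (𝓝 (c / 2)) := by
    apply HasDerivAt.lhopital_zero_nhdsGT
      (f' := D) (g' := fun x => 2 * x)
    · exact Eventually.of_forall fun x => hLd x
    · refine Eventually.of_forall fun x => ?_
      simpa using hasDerivAt_pow 2 x
    · filter_upwards [self_mem_nhdsWithin] with x hx
      exact mul_ne_zero two_ne_zero (ne_of_gt hx)
    · have hL0 : L 0 = 0 := by simp [hL_def, Sf_zero]
      have := (hLd 0).continuousAt
      rw [ContinuousAt, hL0] at this
      exact this.mono_left nhdsWithin_le_nhds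
    · have : Tendsto (fun x : ℝ => x ^ 2) (𝓝 0) (𝓝 0) := by
        simpa using (continuous_pow 2).tendsto (0:ℝ)
      exact this.mono_left nhdsWithin_le_nhds
    · have h2 := (hDslope.mono_left (nhdsWithin_mono _ fun x hx => ne_of_gt hx)).div_const 2
      refine h2.congr fun x => ?_
      rw [div_div, mul_comm]
  -- combined limit
  have hΦ : Tendsto (fun x => F x / x / Sf zt x + L x / x ^ 2) (𝓝[>] (0:ℝ))
      (𝓝 ((∑ j, (zt j - zs j) * zt j) / K + c / 2)) :=
    (hterm1.mono_left (nhdsWithin_mono _ fun x hx => ne_of_gt hx)).add hB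
  -- identify the limit value
  have hval : (∑ j, (zt j - zs j) * zt j) / K + c / 2
      = (1 / (2 * (K : ℝ))) * ∑ j, (zs j - zt j) ^ 2 := by
    have e1 : (∑ j, (zt j - zs j) * zt j)
        = (∑ j, zt j ^ 2) - ∑ j, zs j * zt j := by
      rw [← Finset.sum_sub_distrib]
      exact Finset.sum_congr rfl fun j _ => by ring
    have e2 : (∑ j, (zs j - zt j) ^ 2)
        = (∑ j, zs j ^ 2) - 2 * (∑ j, zs j * zt j) + ∑ j, zt j ^ 2 := by
      rw [Finset.mul_sum, ← Finset.sum_sub_distrib, ← Finset.sum_add_distrib]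
      exact Finset.sum_congr rfl fun j _ => by ring
    rw [hc_def, Cf_zero, Cf_zero, Qf_zero, Qf_zero, Sf_zero, Sf_zero, e1, e2, hsum]
    field_simp
    ring
  rw [← hval]
  have hcomp := hΦ.comp tendsto_inv_atTop_nhdsGT_zero
  refine Tendsto.congr' ?_ hcomp
  filter_upwards [eventually_gt_atTop (0:ℝ)] with τ hτ
  have hτ' : τ ≠ 0 := ne_of_gt hτ
  set x : ℝ := τ⁻¹ with hx_def
  have hxτ : x = τ⁻¹ := rfl
  have hxne : x ≠ 0 := inv_ne_zero hτ'
  have hSs := Sf_pos hK zs x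
  have hSt := Sf_pos hK zt x
  have hsp : ∀ (z : Fin K → ℝ) (j : Fin K),
      softProb z τ j = Real.exp (z j * x) / Sf z x := by
    intro z j
    simp [softProb, Sf, div_eq_mul_inv, hx_def]
  have hlog : ∀ j : Fin K,
      Real.log (softProb zt τ j / softProb zs τ j)
        = (zt j - zs j) * x + L x := by
    intro j
    rw [hsp zt j, hsp zs j, Real.log_div (div_pos (Real.exp_pos _) hSt).ne'
        (div_pos (Real.exp_pos _) hSs).ne',
      Real.log_div (Real.exp_pos _).ne' hSt.ne',
      Real.log_div (Real.exp_pos _).ne' hSs.ne',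
      Real.log_exp, Real.log_exp]
    simp only [hL_def]
    ring
  have hsum2 : (∑ j, softProb zt τ j * Real.log (softProb zt τ j / softProb zs τ j))
      = (x * F x + L x * Sf zt x) / Sf zt x := by
    have : (∑ j, softProb zt τ j * Real.log (softProb zt τ j / softProb zs τ j))
        = ∑ j, (x * ((zt j - zs j) * Real.exp (zt j * x))
            + L x * Real.exp (zt j * x)) / Sf zt x :=
      Finset.sum_congr rfl fun j _ => by rw [hlog j, hsp zt j]; ring
    rw [this, ← Finset.sum_div, Finset.sum_add_distrib, ← Finset.mul_sum, ← Finset.mul_sum]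
    simp only [hF_def, Sf]
  show F x / x / Sf zt x + L x / x ^ 2 = LKL zs zt τ
  rw [LKL, hsum2, hx_def]
  exact key_alg τ (F τ⁻¹) (L τ⁻¹) (Sf zt τ⁻¹) hτ' hSt.ne'
end
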